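/- arXiv:0710.1253 — 2 statements merged into one kernel-verified Lean document; each statement's English description precedes it below -/
import Mathlib

section
/- Let $R$ be a Noetherian commutative ring, $I \subseteq R$ an ideal, and $M$ an arbitrary $R$-module (not assumed finitely generated). Let $\hat{M} = \varprojlim_n M/I^nM$ denote the $I$-adic completion of $M$. Then the natural map $f \colon M/IM \to \hat{M}/I\hat{M}$, induced by the composition of the canonical map $M \to \hat{M}$ with the quotient $\hat{M} \to \hat{M}/I\hat{M}$, is an isomorphism of $R$-modules. -/
open Submodule

/-- Decompose an element of `(span s) • N` as a finite combination with coefficients in `s`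
and components in `N`. -/
lemma span_smul_exists_sum {R M : Type*} [CommRing R] [AddCommGroup M] [Module R M]
    (s : Finset R) (N : Submodule R M) (x : M)
    (hx : x ∈ (Ideal.span (s : Set R)) • N) :
    ∃ c : R → M, (∀ j, c j ∈ N) ∧ x = ∑ j ∈ s, j • c j := by
  refine Submodule.smul_induction_on hx ?_ ?_
  · intro r hr n hn
    obtain ⟨f, hf⟩ := mem_span_finset.mp hr
    refine ⟨fun j => f j • n, fun j => Submodule.smul_mem N _ hn, ?_⟩
    rw [← hf.2, Finset.sum_smul]
    exact Finset.sum_congr rfl fun j _ => by rw [smul_eq_mul, mul_comm, mul_smul]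
  · rintro x y ⟨cx, hcx, rfl⟩ ⟨cy, hcy, rfl⟩
    exact ⟨fun j => cx j + cy j, fun j => Submodule.add_mem N (hcx j) (hcy j), by
      simp [smul_add, Finset.sum_add_distrib]⟩

/-- Key lemma: for Noetherian `R`, any element of the adic completion whose first component
vanishes lies in `I • ⊤`. -/
lemma val_one_eq_zero_mem_smul_top
    {R : Type*} [CommRing R] [IsNoetherianRing R] (I : Ideal R)
    {M : Type*} [AddCommGroup M] [Module R M]
    (x : AdicCompletion I M) (hx : x.val 1 = 0) :
    x ∈ I • (⊤ : Submodule R (AdicCompletion I M)) := by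
  obtain ⟨f, rfl⟩ := AdicCompletion.mk_surjective I M x
  obtain ⟨s, hs⟩ : I.FG := IsNoetherian.noetherian I
  -- successive differences
  set D : ℕ → M := fun i => if i = 0 then f 1 else f (i + 1) - f i with hD
  have hmem : ∀ i, D i ∈ I • (I ^ (i - 1) • ⊤ : Submodule R M) := by
    intro i
    match i with
    | 0 =>
      have h1 : f 1 ∈ (I ^ 1 • ⊤ : Submodule R M) := by
        have := hx
        rw [AdicCompletion.mk_apply_coe, Submodule.mkQ_apply,
          Submodule.Quotient.mk_eq_zero] at this
        exact this
      simpa [hD, pow_zero, Ideal.one_eq_top, Submodule.top_smul, pow_one] using h1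
    | (n + 1) =>
      have h1 : f (n + 1) - f (n + 2) ∈ (I ^ (n + 1) • ⊤ : Submodule R M) :=
        SModEq.sub_mem.mp (f.property (Nat.le_succ (n + 1)))
      have h2 : f (n + 2) - f (n + 1) ∈ (I ^ (n + 1) • ⊤ : Submodule R M) := by
        simpa using Submodule.neg_mem _ h1
      have heq : (I ^ (n + 1) • ⊤ : Submodule R M) = I • (I ^ n • ⊤ : Submodule R M) := by
        rw [pow_succ, mul_comm, ← Ideal.smul_eq_mul, Submodule.smul_assoc]
      simpa [hD, heq] using h2
  -- choose coefficient sequences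
  have hchoice : ∀ i, ∃ c : R → M,
      (∀ j, c j ∈ (I ^ (i - 1) • ⊤ : Submodule R M)) ∧ D i = ∑ j ∈ s, j • c j := by
    intro i
    exact span_smul_exists_sum s _ (D i) (by rw [hs]; exact hmem i)
  choose c hc1 hc2 using hchoice
  -- Cauchy sequences g j
  have hcauchy : ∀ j : R, AdicCompletion.IsAdicCauchy I M (fun n => ∑ i ∈ Finset.range (n + 1), c i j) := by
    intro j m n hmn
    rw [SModEq.sub_mem]
    have hsplit := Finset.sum_range_add_sum_Ico (fun i => c i j)
      (by omega : m + 1 ≤ n + 1)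
    have : (∑ i ∈ Finset.range (m + 1), c i j) - ∑ i ∈ Finset.range (n + 1), c i j
        = -∑ i ∈ Finset.Ico (m + 1) (n + 1), c i j := by
      rw [← hsplit]; abel
    rw [this]
    refine Submodule.neg_mem _ (Submodule.sum_mem _ fun i hi => ?_)
    have hi' : m ≤ i - 1 := by
      simp only [Finset.mem_Ico] at hi; omega
    exact Submodule.smul_mono_left (Ideal.pow_le_pow_right hi') (hc1 i j)
  set g : R → AdicCompletion.AdicCauchySequence I M := fun j => ⟨fun n => ∑ i ∈ Finset.range (n + 1), c i j,
    hcauchy j⟩ with hg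
  have htel : ∀ n, ∑ i ∈ Finset.range (n + 1), D i = f (n + 1) := by
    intro n
    induction n with
    | zero => simp [hD]
    | succ n ih =>
      rw [Finset.sum_range_succ, ih]
      simp [hD]
  have key : AdicCompletion.mk I M f = ∑ j ∈ s, j • AdicCompletion.mk I M (g j) := by
    apply AdicCompletion.ext
    intro n
    rw [AdicCompletion.val_sum_apply]
    have : ∀ j ∈ s, (j • AdicCompletion.mk I M (g j)).val n
        = Submodule.mkQ _ (j • (g j).val n) := fun j _ => by
      rw [AdicCompletion.val_smul_apply, AdicCompletion.mk_apply_coe, ← map_smul]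
    rw [Finset.sum_congr rfl this, ← map_sum, AdicCompletion.mk_apply_coe]
    have hsum : ∑ j ∈ s, j • (g j).val n = f (n + 1) := by
      simp only [hg, Finset.smul_sum]
      rw [Finset.sum_comm, ← htel n]
      exact Finset.sum_congr rfl fun i _ => (hc2 i).symm
    rw [hsum, Submodule.mkQ_apply, Submodule.mkQ_apply, Submodule.Quotient.eq]
    exact SModEq.sub_mem.mp (f.property (Nat.le_succ n))
  rw [key]
  refine Submodule.sum_mem _ fun j hj => ?_
  exact Submodule.smul_mem_smul (by rw [← hs]; exact Ideal.subset_span hj) trivial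

/-- Let `R` be a Noetherian commutative ring, `I ⊆ R` an ideal, and `M` an arbitrary
`R`-module. Then the natural map `M/IM → M̂/IM̂` induced by the canonical map
`M → M̂ = lim M/IⁿM` (the `I`-adic completion) is an isomorphism. -/
theorem forgetful_completion_mod_I_bijective
    (R : Type*) [CommRing R] [IsNoetherianRing R] (I : Ideal R)
    (M : Type*) [AddCommGroup M] [Module R M] :
    Function.Bijective
      (Submodule.mapQ (I • (⊤ : Submodule R M))
        (I • (⊤ : Submodule R (AdicCompletion I M)))
        (AdicCompletion.of I M)
        (by
          rw [← Submodule.map_le_iff_le_comap, Submodule.map_smul'']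
          exact smul_mono_right I (le_top (a := Submodule.map (AdicCompletion.of I M) ⊤)))) := by
  have hval1 : ∀ z ∈ I • (⊤ : Submodule R (AdicCompletion I M)), z.val 1 = 0 := by
    intro z hz
    refine Submodule.smul_induction_on hz ?_ ?_
    · intro r hr w _
      rw [AdicCompletion.val_smul_apply]
      have : w.val 1 ∈ (⊤ : Submodule R _) := trivial
      obtain ⟨m, hm⟩ := Submodule.Quotient.mk_surjective _ (w.val 1)
      rw [← hm, ← Submodule.Quotient.mk_smul, Submodule.Quotient.mk_eq_zero]
      exact Submodule.smul_mem_smul (by rwa [pow_one]) trivial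
    · intro a b ha hb
      rw [AdicCompletion.val_add_apply, ha, hb, add_zero]
  constructor
  · -- injectivity
    rw [← LinearMap.ker_eq_bot, LinearMap.ker_eq_bot']
    intro m hm
    obtain ⟨x, rfl⟩ := Submodule.Quotient.mk_surjective _ m
    rw [Submodule.mapQ_apply, Submodule.Quotient.mk_eq_zero] at hm
    have h1 := hval1 _ hm
    rw [AdicCompletion.of_apply, Submodule.mkQ_apply, Submodule.Quotient.mk_eq_zero,
      pow_one] at h1
    rwa [Submodule.Quotient.mk_eq_zero]
  · -- surjectivity
    intro z
    obtain ⟨x, rfl⟩ := Submodule.Quotient.mk_surjective _ z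
    obtain ⟨m, hm⟩ := Submodule.Quotient.mk_surjective _ (x.val 1)
    refine ⟨Submodule.Quotient.mk m, ?_⟩
    rw [Submodule.mapQ_apply, Submodule.Quotient.eq]
    apply val_one_eq_zero_mem_smul_top
    rw [AdicCompletion.val_sub_apply, AdicCompletion.of_apply, Submodule.mkQ_apply, hm, sub_self]
end

section
/- Let $R$ be a Noetherian commutative ring, $I \subseteq R$ an ideal, and $M$ an arbitrary $R$-module. Let $\hat{M} = \varprojlim_n M/I^nM$ be the $I$-adic completion of $M$, and let $\hat{\pi} \colon \hat{M} \to M/IM$ be the natural map sending a coherent sequence $(m_1, m_2, \ldots)$ to its first component $m_1$. Then the kernel of $\hat{\pi}$ equals the submodule $I\hat{M}$ of $\hat{M}$; that is, a coherent sequence $\mu \in \hat{M}$ satisfies $\hat{\pi}(\mu) = 0$ if and only if $\mu \in I\hat{M}$. -/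
open Submodule AdicCompletion

/-- If an ideal is spanned by a finite set `s`, every element of `I • N` is a finite
sum `∑ a ∈ s, a • y a` with `y a ∈ N`. -/
lemma exists_sum_of_mem_span_smul' {R : Type*} [CommRing R] {M : Type*} [AddCommGroup M]
    [Module R M] (s : Finset R) (N : Submodule R M) {x : M}
    (hx : x ∈ Submodule.span R (s : Set R) • N) :
    ∃ y : R → M, (∀ a, y a ∈ N) ∧ x = ∑ a ∈ s, a • y a := by
  refine Submodule.smul_induction_on hx ?_ ?_
  · intro r hr n hn
    obtain ⟨c, hc⟩ := mem_span_finset.mp hr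
    refine ⟨fun a => c a • n, fun a => N.smul_mem _ hn, ?_⟩
    rw [← hc.2, Finset.sum_smul]
    exact Finset.sum_congr rfl fun a _ => by
      rw [smul_eq_mul, mul_smul, smul_comm]
  · rintro x y ⟨u, hu, rfl⟩ ⟨v, hv, rfl⟩
    exact ⟨u + v, fun a => N.add_mem (hu a) (hv a), by
      rw [← Finset.sum_add_distrib]
      exact Finset.sum_congr rfl fun a _ => (smul_add a (u a) (v a)).symm⟩

/-- Let `R` be a Noetherian commutative ring, `I ⊆ R` an ideal, and `M` an arbitrary
`R`-module.  The kernel of the natural map `π̂ : M̂ → M/IM` from the `I`-adic completion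
(sending a coherent sequence to its first component) is exactly the submodule `I M̂`;
that is, `π̂ μ = 0` if and only if `μ ∈ I M̂`. -/
theorem ker_eval_one_eq_smul
    (R : Type*) [CommRing R] [IsNoetherianRing R] (I : Ideal R)
    (M : Type*) [AddCommGroup M] [Module R M] :
    LinearMap.ker (AdicCompletion.eval I M 1) =
      I • (⊤ : Submodule R (AdicCompletion I M)) := by
  apply le_antisymm
  · -- hard direction: kernel elements are in `I • ⊤`
    intro μ hμ
    obtain ⟨f, rfl⟩ := AdicCompletion.mk_surjective I M μ
    obtain ⟨s, hs⟩ := (IsNoetherian.noetherian I : I.FG)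
    -- the first entry of the Cauchy sequence lies in `I • ⊤`
    have hf1 : f 1 ∈ (I ^ 1 • ⊤ : Submodule R M) := by
      have h0 : (AdicCompletion.mk I M f).val 1 = 0 := hμ
      exact (Submodule.Quotient.mk_eq_zero _).mp h0
    -- auxiliary sequence with `F 0 = 0`
    set F : ℕ → M := fun n => if n = 0 then 0 else f (n + 1) with hF
    have hd : ∀ n : ℕ, F (n + 1) - F n ∈
        Submodule.span R (s : Set R) • (I ^ n • ⊤ : Submodule R M) := by
      intro n
      rw [hs]
      have : I • (I ^ n • ⊤ : Submodule R M) = (I ^ (n + 1) • ⊤ : Submodule R M) := by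
        rw [pow_succ', mul_smul]
      rw [this]
      cases n with
      | zero =>
          have h12 := SModEq.sub_mem.mp (f.property (Nat.le_succ 1)).symm
          simpa [hF] using add_mem h12 hf1
      | succ k =>
          have hsub := SModEq.sub_mem.mp (f.property (Nat.le_succ (k + 2))).symm
          simpa [hF] using hsub
    choose y hy1 hy2 using fun n => exists_sum_of_mem_span_smul' s _ (hd n)
    -- for each generator, form a Cauchy sequence of partial sums
    have gcauchy : ∀ a : R, ∀ n : ℕ,
        (∑ k ∈ Finset.range n, y k a) ≡ (∑ k ∈ Finset.range (n + 1), y k a)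
          [SMOD (I ^ n • ⊤ : Submodule R M)] := by
      intro a n
      rw [SModEq.sub_mem, Finset.sum_range_succ]
      simpa using neg_mem (hy1 n a)
    set g : R → AdicCauchySequence I M := fun a =>
      AdicCauchySequence.mk I M (fun n => ∑ k ∈ Finset.range n, y k a) (gcauchy a) with hg
    have key : AdicCompletion.mk I M f = ∑ a ∈ s, a • AdicCompletion.mk I M (g a) := by
      ext n
      rw [AdicCompletion.val_sum_apply]
      have : ∀ a ∈ s, (a • AdicCompletion.mk I M (g a)).val n =
          Submodule.Quotient.mk (p := (I ^ n • ⊤ : Submodule R M)) (a • (g a).val n) := by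
        intro a _
        rw [AdicCompletion.val_smul]
        rfl
      rw [Finset.sum_congr rfl this]
      simp only [← Submodule.mkQ_apply, ← map_sum]
      have hsum : (∑ a ∈ s, a • (g a).val n) = F n := by
        have : (∑ a ∈ s, a • (g a).val n)
            = ∑ k ∈ Finset.range n, ∑ a ∈ s, a • y k a := by
          simp only [hg, AdicCauchySequence.mk, Finset.smul_sum]
          rw [Finset.sum_comm]
        rw [this]
        have : ∀ k ∈ Finset.range n, (∑ a ∈ s, a • y k a) = F (k + 1) - F k := by
          intro k _
          exact (hy2 k).symm
        rw [Finset.sum_congr rfl this, Finset.sum_range_sub]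
        simp [hF]
      rw [hsum, AdicCompletion.mk_apply_coe, Submodule.mkQ_apply, Submodule.mkQ_apply,
        Submodule.Quotient.eq]
      cases n with
      | zero => simp
      | succ k =>
          have hsub := SModEq.sub_mem.mp (f.property (Nat.le_succ (k + 1)))
          simpa [hF] using hsub
    rw [key]
    refine sum_mem fun a ha => smul_mem_smul ?_ mem_top
    rw [← hs]
    exact Ideal.subset_span ha
  · -- easy direction: `I • ⊤ ⊆ ker`
    refine Submodule.smul_le.mpr fun a ha μ _ => LinearMap.mem_ker.mpr ?_
    rw [map_smul]
    obtain ⟨x, hx⟩ := Submodule.Quotient.mk_surjective _ (AdicCompletion.eval I M 1 μ)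
    rw [← hx, ← Submodule.Quotient.mk_smul, Submodule.Quotient.mk_eq_zero]
    rw [pow_one]
    exact smul_mem_smul ha mem_top
end
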